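/- State-wise CFR regret bound: let (π^t)_{t=1}^T be a sequence of stationary policies and (r^t)_{t=1}^T a sequence of reward functions bounded by r̄ such that Σ_{t=1}^T ρ_s(a, π^t; r^t) ≤ C^T for every state s and action a. Then for every state s and every stationary policy π, Σ_{t=1}^T ( v_s(π; r^t) - v_s(π^t; r^t) ) ≤ C^T / (1-γ). -/

import Mathlib

open scoped BigOperators
open MeasureTheory

/-- A finite discounted Markov decision process `(S, A, p, d_∅, γ)`. -/
structure MDP (S A : Type) [Fintype S] [Fintype A] [DecidableEq S] where
  /-- transition probabilities `p(s' | s, a)` -/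
  p : S → A → S → ℝ
  p_nonneg : ∀ s a s', 0 ≤ p s a s'
  p_sum_one : ∀ s a, ∑ s', p s a s' = 1
  /-- initial state distribution `d_∅` -/
  d0 : S → ℝ
  d0_nonneg : ∀ s, 0 ≤ d0 s
  d0_sum_one : ∑ s, d0 s = 1
  /-- discount factor `γ ∈ [0, 1)` -/
  γ : ℝ
  γ_nonneg : 0 ≤ γ
  γ_lt_one : γ < 1

/-- A stationary policy: a probability distribution `π(·|s)` over actions for each state. -/
structure Policy (S A : Type) [Fintype A] where
  prob : S → A → ℝ
  nonneg : ∀ s a, 0 ≤ prob s a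
  sum_one : ∀ s, ∑ a, prob s a = 1

variable {S A : Type} [Fintype S] [Fintype A] [DecidableEq S]

/-- Distribution of the state `S_i` at time `i` of the Markov chain induced by policy `π`
started at `S_0 = s`. -/
def MDP.stepDist (M : MDP S A) (π : Policy S A) (s : S) : ℕ → S → ℝ
  | 0 => fun s' => if s' = s then 1 else 0
  | i + 1 => fun s' => ∑ s₀ : S, ∑ a : A, M.stepDist π s i s₀ * π.prob s₀ a * M.p s₀ a s'

/-- Expected reward `E[r(S_i, A_{i+1}, S_{i+1})]` at step `i` of the chain induced by `π`
started at `S_0 = s`. -/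
def MDP.expReward (M : MDP S A) (π : Policy S A) (r : S → A → S → ℝ) (s : S) (i : ℕ) : ℝ :=
  ∑ s₀ : S, ∑ a : A, ∑ s' : S, M.stepDist π s i s₀ * π.prob s₀ a * M.p s₀ a s' * r s₀ a s'

/-- The normalized `γ`-discounted expected return
`v_s(π; r) = (1-γ) E[Σ_{i=0}^∞ γ^i r(S_i, A_{i+1}, S_{i+1})]`. -/
noncomputable def MDP.v (M : MDP S A) (π : Policy S A) (r : S → A → S → ℝ) (s : S) : ℝ :=
  (1 - M.γ) * ∑' i : ℕ, M.γ ^ i * M.expReward π r s i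

/-- Expected reward at step `i` of the chain started at `S_0 = s`, conditioned on `A_1 = a`,
following `π` thereafter. -/
def MDP.expRewardQ (M : MDP S A) (π : Policy S A) (r : S → A → S → ℝ) (s : S) (a : A) :
    ℕ → ℝ
  | 0 => ∑ s' : S, M.p s a s' * r s a s'
  | i + 1 => ∑ s' : S, M.p s a s' * M.expReward π r s' i

/-- The normalized `γ`-discounted expected return `q_s(a, π; r)` for taking action `a` in
state `s` and following `π` thereafter. -/
noncomputable def MDP.q (M : MDP S A) (π : Policy S A) (r : S → A → S → ℝ) (s : S) (a : A) :
    ℝ :=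
  (1 - M.γ) * ∑' i : ℕ, M.γ ^ i * M.expRewardQ π r s a i

/-- The (normalized) advantage `ρ_s(a, π; r) = q_s(a, π; r) - v_s(π; r)`. -/
noncomputable def MDP.adv (M : MDP S A) (π : Policy S A) (r : S → A → S → ℝ) (s : S)
    (a : A) : ℝ :=
  M.q π r s a - M.v π r s

/-- The normalized `γ`-discounted expected return from the initial state distribution,
`v_∅(π; r) = E_{S_0 ~ d_∅}[v_{S_0}(π; r)]`. -/
noncomputable def MDP.vInit (M : MDP S A) (π : Policy S A) (r : S → A → S → ℝ) : ℝ :=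
  ∑ s : S, M.d0 s * M.v π r s

/-- The `γ`-discounted future state distribution
`d_s(s'; π) = (1-γ) E[Σ_{i=0}^∞ γ^i 1[S_i = s']]` induced by `π` from `s`. -/
noncomputable def MDP.futureDist (M : MDP S A) (π : Policy S A) (s s' : S) : ℝ :=
  (1 - M.γ) * ∑' i : ℕ, M.γ ^ i * M.stepDist π s i s'

namespace MDPaux

lemma absSumLe {ι : Type} [Fintype ι] (f g : ι → ℝ) (h : ∀ i, |f i| ≤ g i) :
    |∑ i, f i| ≤ ∑ i, g i :=
  (Finset.abs_sum_le_sum_abs _ _).trans (Finset.sum_le_sum fun i _ => h i)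

variable (M : MDP S A)

lemma stepDist_nonneg (π : Policy S A) (s : S) : ∀ i s₀, 0 ≤ M.stepDist π s i s₀
  | 0, s₀ => by simp only [MDP.stepDist]; split <;> norm_num
  | i + 1, s₀ => by
    simp only [MDP.stepDist]
    refine Finset.sum_nonneg fun x _ => Finset.sum_nonneg fun a _ => ?_
    exact mul_nonneg (mul_nonneg (stepDist_nonneg π s i x) (π.nonneg x a)) (M.p_nonneg x a s₀)

lemma stepDist_sum_one (π : Policy S A) (s : S) : ∀ i, ∑ s₀, M.stepDist π s i s₀ = 1
  | 0 => by simp [MDP.stepDist]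
  | i + 1 => by
    simp only [MDP.stepDist]
    rw [Finset.sum_comm]
    have key : ∀ s₀ : S,
        (∑ s' : S, ∑ a : A, M.stepDist π s i s₀ * π.prob s₀ a * M.p s₀ a s')
          = M.stepDist π s i s₀ := by
      intro s₀
      rw [Finset.sum_comm]
      calc ∑ a : A, ∑ s' : S, M.stepDist π s i s₀ * π.prob s₀ a * M.p s₀ a s'
          = ∑ a : A, M.stepDist π s i s₀ * π.prob s₀ a * ∑ s', M.p s₀ a s' := by
            simp [Finset.mul_sum]
        _ = M.stepDist π s i s₀ * ∑ a, π.prob s₀ a := by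
            simp [M.p_sum_one, ← Finset.mul_sum]
        _ = M.stepDist π s i s₀ := by simp [π.sum_one]
    simp only [key]
    exact stepDist_sum_one π s i

lemma sum_weights (π : Policy S A) (s : S) (i : ℕ) :
    ∑ s₀ : S, ∑ a : A, ∑ s' : S,
      M.stepDist π s i s₀ * π.prob s₀ a * M.p s₀ a s' = 1 := by
  have key : ∀ s₀ : S, (∑ a : A, ∑ s' : S,
      M.stepDist π s i s₀ * π.prob s₀ a * M.p s₀ a s') = M.stepDist π s i s₀ := by
    intro s₀
    calc ∑ a : A, ∑ s' : S, M.stepDist π s i s₀ * π.prob s₀ a * M.p s₀ a s'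
        = ∑ a : A, M.stepDist π s i s₀ * π.prob s₀ a * ∑ s', M.p s₀ a s' := by
          simp [Finset.mul_sum]
      _ = M.stepDist π s i s₀ * ∑ a, π.prob s₀ a := by
          simp [M.p_sum_one, ← Finset.mul_sum]
      _ = M.stepDist π s i s₀ := by simp [π.sum_one]
  simp only [key]
  exact stepDist_sum_one M π s i

lemma abs_expReward_le (π : Policy S A) (r : S → A → S → ℝ) (c : ℝ)
    (hc : ∀ s a s', |r s a s'| ≤ c) (s : S) (i : ℕ) :
    |M.expReward π r s i| ≤ c := by
  have h : |M.expReward π r s i| ≤ ∑ s₀ : S, ∑ a : A, ∑ s' : S,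
      M.stepDist π s i s₀ * π.prob s₀ a * M.p s₀ a s' * c := by
    refine absSumLe _ _ fun s₀ => absSumLe _ _ fun a => absSumLe _ _ fun s' => ?_
    have hw : 0 ≤ M.stepDist π s i s₀ * π.prob s₀ a * M.p s₀ a s' :=
      mul_nonneg (mul_nonneg (stepDist_nonneg M π s i s₀) (π.nonneg s₀ a)) (M.p_nonneg s₀ a s')
    rw [abs_mul, abs_of_nonneg hw]
    exact mul_le_mul_of_nonneg_left (hc s₀ a s') hw
  refine h.trans (le_of_eq ?_)
  simp only [← Finset.sum_mul]
  rw [sum_weights M π s i, one_mul]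

lemma summable_geom (f : ℕ → ℝ) (c : ℝ) (h : ∀ i, |f i| ≤ c) :
    Summable (fun i => M.γ ^ i * f i) := by
  refine Summable.of_norm_bounded
    ((summable_geometric_of_lt_one M.γ_nonneg M.γ_lt_one).mul_left c) fun i => ?_
  rw [Real.norm_eq_abs, abs_mul, abs_pow, abs_of_nonneg M.γ_nonneg, mul_comm]
  exact mul_le_mul_of_nonneg_right (h i) (pow_nonneg M.γ_nonneg i)

lemma abs_tsum_geom_le (f : ℕ → ℝ) (c : ℝ) (h : ∀ i, |f i| ≤ c) :
    |∑' i : ℕ, M.γ ^ i * f i| ≤ c * (1 - M.γ)⁻¹ := by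
  have hc : 0 ≤ c := le_trans (abs_nonneg _) (h 0)
  have hsum : Summable (fun i : ℕ => ‖M.γ ^ i * f i‖) := by
    simpa [Real.norm_eq_abs, abs_mul, abs_pow, abs_of_nonneg M.γ_nonneg] using
      ((summable_geom M f c h).abs)
  calc |∑' i : ℕ, M.γ ^ i * f i| ≤ ∑' i : ℕ, ‖M.γ ^ i * f i‖ := by
        simpa [Real.norm_eq_abs] using norm_tsum_le_tsum_norm hsum
    _ ≤ ∑' i : ℕ, c * M.γ ^ i := by
        refine Summable.tsum_le_tsum (fun i => ?_) hsum
          ((summable_geometric_of_lt_one M.γ_nonneg M.γ_lt_one).mul_left c)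
        rw [Real.norm_eq_abs, abs_mul, abs_pow, abs_of_nonneg M.γ_nonneg, mul_comm]
        exact mul_le_mul_of_nonneg_right (h i) (pow_nonneg M.γ_nonneg i)
    _ = c * (1 - M.γ)⁻¹ := by
        rw [tsum_mul_left, tsum_geometric_of_lt_one M.γ_nonneg M.γ_lt_one]

lemma abs_v_le (π : Policy S A) (r : S → A → S → ℝ) (c : ℝ)
    (hc : ∀ s a s', |r s a s'| ≤ c) (s : S) : |M.v π r s| ≤ c := by
  have hγ : 0 < 1 - M.γ := sub_pos.mpr M.γ_lt_one
  have := abs_tsum_geom_le M (M.expReward π r s) c (abs_expReward_le M π r c hc s)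
  rw [MDP.v, abs_mul, abs_of_nonneg hγ.le]
  calc (1 - M.γ) * |∑' i : ℕ, M.γ ^ i * M.expReward π r s i|
      ≤ (1 - M.γ) * (c * (1 - M.γ)⁻¹) := mul_le_mul_of_nonneg_left this hγ.le
    _ = c := by field_simp

lemma abs_expRewardQ_le (π : Policy S A) (r : S → A → S → ℝ) (c : ℝ)
    (hc : ∀ s a s', |r s a s'| ≤ c) (s : S) (a : A) :
    ∀ i, |M.expRewardQ π r s a i| ≤ c
  | 0 => by
    refine le_trans (absSumLe _ (fun s' => M.p s a s' * c) fun s' => ?_) ?_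
    · rw [abs_mul, abs_of_nonneg (M.p_nonneg s a s')]
      exact mul_le_mul_of_nonneg_left (hc s a s') (M.p_nonneg s a s')
    · rw [← Finset.sum_mul, M.p_sum_one, one_mul]
  | i + 1 => by
    refine le_trans (absSumLe _ (fun s' => M.p s a s' * c) fun s' => ?_) ?_
    · rw [abs_mul, abs_of_nonneg (M.p_nonneg s a s')]
      exact mul_le_mul_of_nonneg_left (abs_expReward_le M π r c hc s' i) (M.p_nonneg s a s')
    · rw [← Finset.sum_mul, M.p_sum_one, one_mul]

lemma abs_q_le (π : Policy S A) (r : S → A → S → ℝ) (c : ℝ)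
    (hc : ∀ s a s', |r s a s'| ≤ c) (s : S) (a : A) : |M.q π r s a| ≤ c := by
  have hγ : 0 < 1 - M.γ := sub_pos.mpr M.γ_lt_one
  have := abs_tsum_geom_le M (M.expRewardQ π r s a) c (abs_expRewardQ_le M π r c hc s a)
  rw [MDP.q, abs_mul, abs_of_nonneg hγ.le]
  calc (1 - M.γ) * |∑' i : ℕ, M.γ ^ i * M.expRewardQ π r s a i|
      ≤ (1 - M.γ) * (c * (1 - M.γ)⁻¹) := mul_le_mul_of_nonneg_left this hγ.le
    _ = c := by field_simp

set_option maxHeartbeats 1000000 in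
lemma q_eq (π : Policy S A) (r : S → A → S → ℝ) (c : ℝ)
    (hc : ∀ s a s', |r s a s'| ≤ c) (s : S) (a : A) :
    M.q π r s a = (1 - M.γ) * (∑ s' : S, M.p s a s' * r s a s')
      + M.γ * ∑ s' : S, M.p s a s' * M.v π r s' := by
  have hsum : Summable (fun i => M.γ ^ i * M.expRewardQ π r s a i) :=
    summable_geom M _ c (abs_expRewardQ_le M π r c hc s a)
  have hsh : ∀ s' : S, Summable (fun i : ℕ =>
      M.γ * (M.p s a s' * (M.γ ^ i * M.expReward π r s' i))) := by
    intro s'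
    exact (((summable_geom M (M.expReward π r s') c
      (abs_expReward_le M π r c hc s')).mul_left (M.p s a s')).mul_left M.γ)
  have key : ∑' i : ℕ, M.γ ^ (i + 1) * M.expRewardQ π r s a (i + 1)
      = M.γ * ∑ s' : S, M.p s a s' * ∑' i : ℕ, M.γ ^ i * M.expReward π r s' i := by
    calc ∑' i : ℕ, M.γ ^ (i + 1) * M.expRewardQ π r s a (i + 1)
        = ∑' i : ℕ, ∑ s' : S, M.γ * (M.p s a s' * (M.γ ^ i * M.expReward π r s' i)) := by
          refine tsum_congr fun i => ?_
          rw [MDP.expRewardQ, Finset.mul_sum]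
          refine Finset.sum_congr rfl fun s' _ => by ring
      _ = ∑ s' : S, ∑' i : ℕ, M.γ * (M.p s a s' * (M.γ ^ i * M.expReward π r s' i)) :=
          Summable.tsum_finsetSum fun s' _ => hsh s'
      _ = M.γ * ∑ s' : S, M.p s a s' * ∑' i : ℕ, M.γ ^ i * M.expReward π r s' i := by
          rw [Finset.mul_sum]
          exact Finset.sum_congr rfl fun s' _ => by rw [tsum_mul_left, tsum_mul_left]
  rw [MDP.q, Summable.tsum_eq_zero_add hsum, key]
  simp only [MDP.v, MDP.expRewardQ, pow_zero, one_mul]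
  rw [show (∑ s' : S, M.p s a s' * ((1 - M.γ) * ∑' i : ℕ, M.γ ^ i * M.expReward π r s' i))
      = (1 - M.γ) * ∑ s' : S, M.p s a s' * ∑' i : ℕ, M.γ ^ i * M.expReward π r s' i from by
        rw [Finset.mul_sum]; exact Finset.sum_congr rfl fun _ _ => by ring]
  ring

omit [DecidableEq S] in
lemma triple_comm (f : S → A → S → ℝ) :
    ∑ s' : S, ∑ s₀ : S, ∑ a : A, f s₀ a s' = ∑ s₀ : S, ∑ a : A, ∑ s' : S, f s₀ a s' := by
  rw [Finset.sum_comm]; exact Finset.sum_congr rfl fun _ _ => Finset.sum_comm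

/-- local expected advantage at step `i` -/
noncomputable def G (M : MDP S A) (π π' : Policy S A) (r : S → A → S → ℝ) (s : S) (i : ℕ) : ℝ :=
  ∑ s₀ : S, M.stepDist π s i s₀ * ∑ a : A, π.prob s₀ a * M.adv π' r s₀ a

noncomputable def F (M : MDP S A) (π π' : Policy S A) (r : S → A → S → ℝ) (s : S) (i : ℕ) : ℝ :=
  M.γ ^ i * ∑ s₀ : S, M.stepDist π s i s₀ * M.v π' r s₀

lemma step_id (π π' : Policy S A) (r : S → A → S → ℝ) (c : ℝ)
    (hc : ∀ s a s', |r s a s'| ≤ c) (s : S) (i : ℕ) :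
    M.γ ^ i * G M π π' r s i
      = (1 - M.γ) * (M.γ ^ i * M.expReward π r s i) + (F M π π' r s (i + 1) - F M π π' r s i) := by
  have hadv : ∀ s₀ a, M.adv π' r s₀ a
      = (1 - M.γ) * (∑ s' : S, M.p s₀ a s' * r s₀ a s')
        + M.γ * ∑ s' : S, M.p s₀ a s' * M.v π' r s' - M.v π' r s₀ := by
    intro s₀ a; rw [MDP.adv, q_eq M π' r c hc]
  have ha : ∑ s₀ : S, M.stepDist π s i s₀ *
        ∑ a : A, π.prob s₀ a * ((1 - M.γ) * ∑ s' : S, M.p s₀ a s' * r s₀ a s')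
      = (1 - M.γ) * M.expReward π r s i := by
    rw [MDP.expReward, Finset.mul_sum]
    refine Finset.sum_congr rfl fun s₀ _ => ?_
    rw [Finset.mul_sum, Finset.mul_sum]
    refine Finset.sum_congr rfl fun a _ => ?_
    rw [Finset.mul_sum, Finset.mul_sum, Finset.mul_sum, Finset.mul_sum]
    exact Finset.sum_congr rfl fun s' _ => by ring
  have hb : ∑ s₀ : S, M.stepDist π s i s₀ *
        ∑ a : A, π.prob s₀ a * (M.γ * ∑ s' : S, M.p s₀ a s' * M.v π' r s')
      = M.γ * ∑ s' : S, M.stepDist π s (i + 1) s' * M.v π' r s' := by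
    calc ∑ s₀ : S, M.stepDist π s i s₀ *
          ∑ a : A, π.prob s₀ a * (M.γ * ∑ s' : S, M.p s₀ a s' * M.v π' r s')
        = ∑ s₀ : S, ∑ a : A, ∑ s' : S,
            M.γ * (M.stepDist π s i s₀ * π.prob s₀ a * M.p s₀ a s' * M.v π' r s') := by
          refine Finset.sum_congr rfl fun s₀ _ => ?_
          rw [Finset.mul_sum]
          refine Finset.sum_congr rfl fun a _ => ?_
          rw [Finset.mul_sum, Finset.mul_sum, Finset.mul_sum]
          exact Finset.sum_congr rfl fun s' _ => by ring
      _ = ∑ s' : S, ∑ s₀ : S, ∑ a : A,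
            M.γ * (M.stepDist π s i s₀ * π.prob s₀ a * M.p s₀ a s' * M.v π' r s') :=
          (triple_comm _).symm
      _ = M.γ * ∑ s' : S, M.stepDist π s (i + 1) s' * M.v π' r s' := by
          rw [Finset.mul_sum]
          refine Finset.sum_congr rfl fun s' _ => ?_
          simp only [MDP.stepDist, Finset.sum_mul, Finset.mul_sum]
  have hcv : ∑ s₀ : S, M.stepDist π s i s₀ * ∑ a : A, π.prob s₀ a * M.v π' r s₀
      = ∑ s₀ : S, M.stepDist π s i s₀ * M.v π' r s₀ := by
    refine Finset.sum_congr rfl fun s₀ _ => ?_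
    rw [← Finset.sum_mul, π.sum_one, one_mul]
  have hsplit : ∀ s₀ : S, M.stepDist π s i s₀ * ∑ a : A, π.prob s₀ a * M.adv π' r s₀ a
      = M.stepDist π s i s₀ *
          ∑ a : A, π.prob s₀ a * ((1 - M.γ) * ∑ s' : S, M.p s₀ a s' * r s₀ a s')
        + M.stepDist π s i s₀ *
          ∑ a : A, π.prob s₀ a * (M.γ * ∑ s' : S, M.p s₀ a s' * M.v π' r s')
        - M.stepDist π s i s₀ * ∑ a : A, π.prob s₀ a * M.v π' r s₀ := by
    intro s₀
    rw [← mul_add, ← mul_sub]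
    congr 1
    rw [← Finset.sum_add_distrib, ← Finset.sum_sub_distrib]
    refine Finset.sum_congr rfl fun a _ => ?_
    rw [hadv]
    ring
  have hG : G M π π' r s i
      = (1 - M.γ) * M.expReward π r s i
        + M.γ * (∑ s' : S, M.stepDist π s (i + 1) s' * M.v π' r s')
        - ∑ s₀ : S, M.stepDist π s i s₀ * M.v π' r s₀ := by
    rw [G]
    simp only [hsplit]
    rw [Finset.sum_sub_distrib, Finset.sum_add_distrib, ha, hb, hcv]
  rw [hG, F, F]
  ring

lemma abs_G_le (π π' : Policy S A) (r : S → A → S → ℝ) (c : ℝ)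
    (hc : ∀ s a s', |r s a s'| ≤ c) (s : S) (i : ℕ) :
    |G M π π' r s i| ≤ 2 * c := by
  have hb : ∀ s₀ : S, |∑ a : A, π.prob s₀ a * M.adv π' r s₀ a| ≤ 2 * c := by
    intro s₀
    refine (absSumLe _ (fun a => π.prob s₀ a * (2 * c)) fun a => ?_).trans ?_
    · rw [abs_mul, abs_of_nonneg (π.nonneg s₀ a)]
      refine mul_le_mul_of_nonneg_left ?_ (π.nonneg s₀ a)
      calc |M.adv π' r s₀ a| ≤ |M.q π' r s₀ a| + |M.v π' r s₀| := abs_sub _ _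
        _ ≤ c + c := add_le_add (abs_q_le M π' r c hc s₀ a) (abs_v_le M π' r c hc s₀)
        _ = 2 * c := by ring
    · rw [← Finset.sum_mul, π.sum_one, one_mul]
  refine (absSumLe _ (fun s₀ => M.stepDist π s i s₀ * (2 * c)) fun s₀ => ?_).trans ?_
  · rw [abs_mul, abs_of_nonneg (stepDist_nonneg M π s i s₀)]
    exact mul_le_mul_of_nonneg_left (hb s₀) (stepDist_nonneg M π s i s₀)
  · rw [← Finset.sum_mul, stepDist_sum_one M π s i, one_mul]

lemma pdl (π π' : Policy S A) (r : S → A → S → ℝ) (c : ℝ)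
    (hc : ∀ s a s', |r s a s'| ≤ c) (s : S) :
    ∑' i : ℕ, M.γ ^ i * G M π π' r s i = M.v π r s - M.v π' r s := by
  have hsumG : Summable (fun i => M.γ ^ i * G M π π' r s i) :=
    summable_geom M _ (2 * c) (abs_G_le M π π' r c hc s)
  have hsumR : Summable (fun i => M.γ ^ i * M.expReward π r s i) :=
    summable_geom M _ c (abs_expReward_le M π r c hc s)
  have hpart : ∀ n : ℕ, ∑ i ∈ Finset.range n, M.γ ^ i * G M π π' r s i
      = (1 - M.γ) * ∑ i ∈ Finset.range n, M.γ ^ i * M.expReward π r s i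
        + (F M π π' r s n - F M π π' r s 0) := by
    intro n
    rw [← Finset.sum_range_sub (fun i => F M π π' r s i) n, Finset.mul_sum,
      ← Finset.sum_add_distrib]
    exact Finset.sum_congr rfl fun i _ => step_id M π π' r c hc s i
  have hFb : ∀ n : ℕ, ‖F M π π' r s n‖ ≤ c * M.γ ^ n := by
    intro n
    have h1 : |∑ s₀ : S, M.stepDist π s n s₀ * M.v π' r s₀| ≤ c := by
      refine (absSumLe _ (fun s₀ => M.stepDist π s n s₀ * c) fun s₀ => ?_).trans ?_
      · rw [abs_mul, abs_of_nonneg (stepDist_nonneg M π s n s₀)]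
        exact mul_le_mul_of_nonneg_left (abs_v_le M π' r c hc s₀)
          (stepDist_nonneg M π s n s₀)
      · rw [← Finset.sum_mul, stepDist_sum_one M π s n, one_mul]
    rw [F, Real.norm_eq_abs, abs_mul, abs_pow, abs_of_nonneg M.γ_nonneg, mul_comm]
    exact mul_le_mul_of_nonneg_right h1 (pow_nonneg M.γ_nonneg n)
  have hF0 : Filter.Tendsto (fun n => F M π π' r s n) Filter.atTop (nhds 0) := by
    refine squeeze_zero_norm hFb ?_
    have := (tendsto_pow_atTop_nhds_zero_of_lt_one M.γ_nonneg M.γ_lt_one).const_mul c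
    simpa using this
  have hF0v : F M π π' r s 0 = M.v π' r s := by
    simp [F, MDP.stepDist]
  have h1 : Filter.Tendsto (fun n => ∑ i ∈ Finset.range n, M.γ ^ i * G M π π' r s i)
      Filter.atTop (nhds (∑' i : ℕ, M.γ ^ i * G M π π' r s i)) :=
    hsumG.hasSum.tendsto_sum_nat
  have h2 : Filter.Tendsto (fun n => ∑ i ∈ Finset.range n, M.γ ^ i * G M π π' r s i)
      Filter.atTop (nhds (M.v π r s - M.v π' r s)) := by
    have hR : Filter.Tendsto
        (fun n => (1 - M.γ) * ∑ i ∈ Finset.range n, M.γ ^ i * M.expReward π r s i)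
        Filter.atTop (nhds (M.v π r s)) := by
      exact (hsumR.hasSum.tendsto_sum_nat).const_mul (1 - M.γ)
    have hT : Filter.Tendsto
        (fun n => (1 - M.γ) * ∑ i ∈ Finset.range n, M.γ ^ i * M.expReward π r s i
          + (F M π π' r s n - F M π π' r s 0))
        Filter.atTop (nhds (M.v π r s + (0 - F M π π' r s 0))) :=
      hR.add (hF0.sub tendsto_const_nhds)
    have h2' := hT.congr (fun n => (hpart n).symm)
    rw [hF0v] at h2'
    simpa [sub_eq_add_neg] using h2'
  exact tendsto_nhds_unique h1 h2

end MDPaux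

/-- **State-wise CFR regret bound**: if the state-local cumulative advantages are bounded
by `C` at every state and action, then for every state `s` and every stationary policy
`π`, the cumulative full regret from `s` is at most `C / (1 - γ)`. -/
theorem cfr_statewise_regret_bound
    (M : MDP S A) (T : ℕ) (πs : Fin T → Policy S A)
    (rbar : ℝ) (hrbar : 0 < rbar)
    (rs : Fin T → S → A → S → ℝ) (hr : ∀ t s a s', |rs t s a s'| ≤ rbar)
    (C : ℝ) (hC : ∀ (s : S) (a : A), ∑ t : Fin T, M.adv (πs t) (rs t) s a ≤ C)
    (s : S) (π : Policy S A) :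
    ∑ t : Fin T, (M.v π (rs t) s - M.v (πs t) (rs t) s) ≤ C / (1 - M.γ) := by
  have hgeo := summable_geometric_of_lt_one M.γ_nonneg M.γ_lt_one
  have hsummand : ∀ t : Fin T, Summable (fun i => M.γ ^ i * MDPaux.G M π (πs t) (rs t) s i) :=
    fun t => MDPaux.summable_geom M _ (2 * rbar) (MDPaux.abs_G_le M π (πs t) (rs t) rbar (hr t) s)
  have key : ∀ i : ℕ, ∑ t : Fin T, MDPaux.G M π (πs t) (rs t) s i ≤ C := by
    intro i
    have step1 : ∑ t : Fin T, MDPaux.G M π (πs t) (rs t) s i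
        = ∑ s₀ : S, M.stepDist π s i s₀ *
            ∑ a : A, π.prob s₀ a * ∑ t : Fin T, M.adv (πs t) (rs t) s₀ a := by
      simp only [MDPaux.G]
      rw [Finset.sum_comm]
      refine Finset.sum_congr rfl fun s₀ _ => ?_
      rw [← Finset.mul_sum]
      congr 1
      rw [Finset.sum_comm]
      exact Finset.sum_congr rfl fun a _ => (Finset.mul_sum _ _ _).symm
    have inner : ∀ s₀ : S,
        ∑ a : A, π.prob s₀ a * ∑ t : Fin T, M.adv (πs t) (rs t) s₀ a ≤ C := by
      intro s₀
      calc ∑ a : A, π.prob s₀ a * ∑ t : Fin T, M.adv (πs t) (rs t) s₀ a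
          ≤ ∑ a : A, π.prob s₀ a * C :=
            Finset.sum_le_sum fun a _ =>
              mul_le_mul_of_nonneg_left (hC s₀ a) (π.nonneg s₀ a)
        _ = C := by rw [← Finset.sum_mul, π.sum_one, one_mul]
    rw [step1]
    calc ∑ s₀ : S, M.stepDist π s i s₀ *
          ∑ a : A, π.prob s₀ a * ∑ t : Fin T, M.adv (πs t) (rs t) s₀ a
        ≤ ∑ s₀ : S, M.stepDist π s i s₀ * C :=
          Finset.sum_le_sum fun s₀ _ =>
            mul_le_mul_of_nonneg_left (inner s₀) (MDPaux.stepDist_nonneg M π s i s₀)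
      _ = C := by rw [← Finset.sum_mul, MDPaux.stepDist_sum_one M π s i, one_mul]
  calc ∑ t : Fin T, (M.v π (rs t) s - M.v (πs t) (rs t) s)
      = ∑ t : Fin T, ∑' i : ℕ, M.γ ^ i * MDPaux.G M π (πs t) (rs t) s i :=
        Finset.sum_congr rfl fun t _ => (MDPaux.pdl M π (πs t) (rs t) rbar (hr t) s).symm
    _ = ∑' i : ℕ, ∑ t : Fin T, M.γ ^ i * MDPaux.G M π (πs t) (rs t) s i :=
        (Summable.tsum_finsetSum fun t _ => hsummand t).symm
    _ ≤ ∑' i : ℕ, M.γ ^ i * C := by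
        refine Summable.tsum_le_tsum (fun i => ?_) (summable_sum fun t _ => hsummand t)
          (hgeo.mul_right C)
        rw [← Finset.mul_sum]
        exact mul_le_mul_of_nonneg_left (key i) (pow_nonneg M.γ_nonneg i)
    _ = C / (1 - M.γ) := by
        rw [tsum_mul_right, tsum_geometric_of_lt_one M.γ_nonneg M.γ_lt_one, inv_mul_eq_div]
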